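/- For every odd integer k ≥ 1 and all real numbers a ≤ b, |∫_a^b err(x)^k dx| ≤ (1/(k+1)) · δ^{k+1}. -/

import Mathlib

open MeasureTheory

/-- Greatest element of `F` below `x`. -/
noncomputable def flF (F : Set ℝ) (x : ℝ) : ℝ := sSup (F ∩ Set.Iic x)

/-- Least element of `F` above `x`. -/
noncomputable def ceF (F : Set ℝ) (x : ℝ) : ℝ := sInf (F ∩ Set.Ici x)

lemma flF_mem {F : Set ℝ} (hF_closed : IsClosed F) (hF_below : ∀ x : ℝ, ∃ z ∈ F, z ≤ x)
    (x : ℝ) : flF F x ∈ F ∩ Set.Iic x := by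
  obtain ⟨z, hz, hzx⟩ := hF_below x
  exact (hF_closed.inter isClosed_Iic).csSup_mem ⟨z, hz, hzx⟩ ⟨x, fun y hy => hy.2⟩

lemma ceF_mem {F : Set ℝ} (hF_closed : IsClosed F) (hF_above : ∀ x : ℝ, ∃ z ∈ F, x ≤ z)
    (x : ℝ) : ceF F x ∈ F ∩ Set.Ici x := by
  obtain ⟨z, hz, hzx⟩ := hF_above x
  exact (hF_closed.inter isClosed_Ici).csInf_mem ⟨z, hz, hzx⟩ ⟨x, fun y hy => hy.2⟩

lemma le_flF_of_mem {F : Set ℝ} {y x : ℝ} (hy : y ∈ F) (hyx : y ≤ x) : y ≤ flF F x :=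
  le_csSup ⟨x, fun w hw => hw.2⟩ ⟨hy, hyx⟩

lemma ceF_le_of_mem {F : Set ℝ} {y x : ℝ} (hy : y ∈ F) (hxy : x ≤ y) : ceF F x ≤ y :=
  csInf_le ⟨x, fun w hw => hw.2⟩ ⟨hy, hxy⟩

lemma gap_not_mem {F : Set ℝ} {x y : ℝ} (hy : y ∈ Set.Ioo (flF F x) (ceF F x)) : y ∉ F := by
  intro hyF
  rcases le_or_gt y x with h | h
  · exact absurd (le_flF_of_mem hyF h) (not_le.2 hy.1)
  · exact absurd (ceF_le_of_mem hyF h.le) (not_le.2 hy.2)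

lemma flF_gap {F : Set ℝ} (hF_closed : IsClosed F) (hF_below : ∀ x : ℝ, ∃ z ∈ F, z ≤ x)
    {x y : ℝ} (hy : y ∈ Set.Ioo (flF F x) (ceF F x)) : flF F y = flF F x := by
  refine le_antisymm (csSup_le ⟨flF F x, (flF_mem hF_closed hF_below x).1, hy.1.le⟩ ?_)
    (le_flF_of_mem (flF_mem hF_closed hF_below x).1 hy.1.le)
  rintro w ⟨hwF, hwy⟩
  by_contra hw
  exact gap_not_mem (F := F) (x := x) ⟨not_le.1 hw, lt_of_le_of_lt hwy hy.2⟩ hwF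

lemma ceF_gap {F : Set ℝ} (hF_closed : IsClosed F) (hF_above : ∀ x : ℝ, ∃ z ∈ F, x ≤ z)
    {x y : ℝ} (hy : y ∈ Set.Ioo (flF F x) (ceF F x)) : ceF F y = ceF F x := by
  refine le_antisymm (ceF_le_of_mem (ceF_mem hF_closed hF_above x).1 hy.2.le)
    (le_csInf ⟨ceF F x, (ceF_mem hF_closed hF_above x).1, hy.2.le⟩ ?_)
  rintro w ⟨hwF, hwy⟩
  by_contra hw
  exact gap_not_mem (F := F) (x := x) ⟨lt_of_lt_of_le hy.1 hwy, not_le.1 hw⟩ hwF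

lemma flF_self {F : Set ℝ} (hF_closed : IsClosed F) (hF_below : ∀ x : ℝ, ∃ z ∈ F, z ≤ x)
    {x : ℝ} (hx : x ∈ F) : flF F x = x :=
  le_antisymm (flF_mem hF_closed hF_below x).2 (le_flF_of_mem hx le_rfl)

lemma ceF_self {F : Set ℝ} (hF_closed : IsClosed F) (hF_above : ∀ x : ℝ, ∃ z ∈ F, x ≤ z)
    {x : ℝ} (hx : x ∈ F) : ceF F x = x :=
  le_antisymm (ceF_le_of_mem hx le_rfl) (ceF_mem hF_closed hF_above x).2

lemma infDist_eq_min {F : Set ℝ} (hF_closed : IsClosed F) (hF_ne : F.Nonempty)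
    (hF_below : ∀ x : ℝ, ∃ z ∈ F, z ≤ x) (hF_above : ∀ x : ℝ, ∃ z ∈ F, x ≤ z) (x : ℝ) :
    Metric.infDist x F = min (x - flF F x) (ceF F x - x) := by
  apply le_antisymm
  · apply le_min
    · have h0 : flF F x ≤ x := Set.mem_Iic.1 (flF_mem hF_closed hF_below x).2
      have := Metric.infDist_le_dist_of_mem (x := x) (flF_mem hF_closed hF_below x).1
      rw [Real.dist_eq, abs_of_nonneg (by linarith)] at this
      linarith
    · have h0 : x ≤ ceF F x := Set.mem_Ici.1 (ceF_mem hF_closed hF_above x).2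
      have := Metric.infDist_le_dist_of_mem (x := x) (ceF_mem hF_closed hF_above x).1
      rw [Real.dist_eq, abs_of_nonpos (by linarith)] at this
      linarith
  · by_contra hcon
    obtain ⟨y, hyF, hlt⟩ := (Metric.infDist_lt_iff hF_ne).1 (not_le.1 hcon)
    rw [Real.dist_eq] at hlt
    rcases le_or_gt y x with h | h
    · have h1 : y ≤ flF F x := le_flF_of_mem hyF h
      rw [abs_of_nonneg (by linarith)] at hlt
      have := min_le_left (x - flF F x) (ceF F x - x)
      linarith
    · have h1 : ceF F x ≤ y := ceF_le_of_mem hyF h.le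
      rw [abs_of_nonpos (by linarith)] at hlt
      have := min_le_right (x - flF F x) (ceF F x - x)
      linarith
theorem error_int_nearest_odd_add
    (F : Set ℝ) (hF_closed : IsClosed F) (hF_ne : F.Nonempty)
    (hF_below : ∀ x : ℝ, ∃ z ∈ F, z ≤ x) (hF_above : ∀ x : ℝ, ∃ z ∈ F, x ≤ z)
    (rd : ℝ → ℝ) (hrd_meas : Measurable rd)
    (hrd_mem : ∀ x : ℝ, rd x = flF F x ∨ rd x = ceF F x)
    (hrd_near : ∀ x : ℝ, |rd x - x| = min (x - flF F x) (ceF F x - x))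
    (δ : ℝ) (hδ : 0 < δ) (hgap : ∀ x : ℝ, ceF F x - flF F x ≤ 2 * δ)
    (k : ℕ) (hk : 1 ≤ k) (hodd : Odd k) (a b : ℝ) (hab : a ≤ b) :
    |∫ x in a..b, (rd x - x) ^ k| ≤ (1 / (k + 1)) * δ ^ (k + 1) := by
  classical
  have hk0 : k ≠ 0 := by omega
  set K : ℝ := (k : ℝ) + 1 with hK_def
  have hK : (0 : ℝ) < K := by positivity
  set d : ℝ → ℝ := fun x => Metric.infDist x F with hd_def
  have hd_eq : ∀ x, d x = min (x - flF F x) (ceF F x - x) :=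
    infDist_eq_min hF_closed hF_ne hF_below hF_above
  have hfl_le : ∀ x, flF F x ≤ x := fun x => Set.mem_Iic.1 (flF_mem hF_closed hF_below x).2
  have hle_ce : ∀ x, x ≤ ceF F x := fun x => Set.mem_Ici.1 (ceF_mem hF_closed hF_above x).2
  have hd_nonneg : ∀ x, 0 ≤ d x := fun x => Metric.infDist_nonneg
  have hd_le : ∀ x, d x ≤ δ := by
    intro x
    rw [hd_eq x]
    rcases min_le_iff.1 (le_refl (min (x - flF F x) (ceF F x - x))) with _ | _ <;>
    · have h1 := min_le_left (x - flF F x) (ceF F x - x)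
      have h2 := min_le_right (x - flF F x) (ceF F x - x)
      have := hgap x
      linarith
  have he_abs : ∀ x, |rd x - x| = d x := fun x => by rw [hrd_near x, hd_eq x]
  -- rounding direction on strict halves
  have he_lt : ∀ x, x - flF F x < ceF F x - x → rd x - x = flF F x - x := by
    intro x h
    rcases hrd_mem x with h1 | h1
    · rw [h1]
    · exfalso
      have h2 := hrd_near x
      rw [h1, abs_of_nonneg (by linarith [hle_ce x]), min_eq_left h.le] at h2
      linarith
  have he_gt : ∀ x, ceF F x - x < x - flF F x → rd x - x = ceF F x - x := by
    intro x h
    rcases hrd_mem x with h1 | h1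
    · exfalso
      have h2 := hrd_near x
      rw [h1, abs_of_nonpos (by linarith [hfl_le x]), min_eq_right h.le] at h2
      linarith
    · rw [h1]
  have he_mem : ∀ x ∈ F, rd x - x = 0 := by
    intro x hx
    have := he_abs x
    rw [hd_def] at this
    simp only [Metric.infDist_zero_of_mem hx] at this
    exact abs_eq_zero.1 this
  -- antiderivative
  set H : ℝ → ℝ := fun x => -(d x) ^ (k + 1) / K with hH_def
  have hH_cont : Continuous H := by
    apply Continuous.div_const
    exact ((Metric.continuous_infDist_pt F).pow (k + 1)).neg
  -- the a.e.-modified integrand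
  set g' : ℝ → ℝ := fun x => if x ∈ F then 0 else
    (if x - flF F x < ceF F x - x then (flF F x - x) ^ k else (ceF F x - x) ^ k) with hg'_def
  -- midpoints: countable exceptional set
  set M : Set ℝ := {x | x ∉ F ∧ x - flF F x = ceF F x - x} with hM_def
  have hnotF_lt : ∀ x, x ∉ F → flF F x < x ∧ x < ceF F x := by
    intro x hx
    constructor
    · rcases lt_or_eq_of_le (hfl_le x) with h | h
      · exact h
      · exact absurd (h ▸ (flF_mem hF_closed hF_below x).1) hx
    · rcases lt_or_eq_of_le (hle_ce x) with h | h
      · exact h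
      · exact absurd (h ▸ (ceF_mem hF_closed hF_above x).1) hx
  have hM_count : M.Countable := by
    apply Set.Countable.mono _ (Set.countable_range
      (fun q : ℚ => (flF F (q : ℝ) + ceF F (q : ℝ)) / 2))
    rintro x ⟨hxF, hmid⟩
    obtain ⟨h1, h2⟩ := hnotF_lt x hxF
    obtain ⟨q, hq1, hq2⟩ := exists_rat_btwn (h1.trans h2)
    refine ⟨q, ?_⟩
    show (flF F (q : ℝ) + ceF F (q : ℝ)) / 2 = x
    rw [flF_gap hF_closed hF_below ⟨hq1, hq2⟩, ceF_gap hF_closed hF_above ⟨hq1, hq2⟩]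
    linarith
  have hM_null : (volume : Measure ℝ) M = 0 := hM_count.measure_zero _
  -- g' agrees with the error integrand off M
  have hg'_eq : ∀ x ∉ M, (rd x - x) ^ k = g' x := by
    intro x hx
    by_cases hxF : x ∈ F
    · rw [hg'_def]
      simp only [if_pos hxF, he_mem x hxF, zero_pow hk0]
    · have hne : x - flF F x ≠ ceF F x - x := fun h => hx ⟨hxF, h⟩
      rcases lt_or_gt_of_ne hne with h | h
      · rw [he_lt x h, hg'_def]
        simp only [if_neg hxF, if_pos h]
      · rw [he_gt x h, hg'_def]
        simp only [if_neg hxF, if_neg (not_lt.2 h.le)]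
  -- integrability
  have hf'_meas : Measurable (fun x => (rd x - x) ^ k) :=
    (hrd_meas.sub measurable_id).pow_const k
  have hf'_int : IntervalIntegrable (fun x => (rd x - x) ^ k) volume a b := by
    rw [intervalIntegrable_iff_integrableOn_Icc_of_le hab]
    refine Integrable.mono' (integrable_const (δ ^ k)) hf'_meas.aestronglyMeasurable ?_
    refine Filter.Eventually.of_forall fun x => ?_
    rw [Real.norm_eq_abs, abs_pow]
    exact pow_le_pow_left₀ (abs_nonneg _) (by rw [he_abs x]; exact hd_le x) k
  have hg'_ae : ∀ᵐ x ∂(volume : Measure ℝ), (rd x - x) ^ k = g' x := by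
    refine measure_mono_null ?_ hM_null
    intro x hx
    simp only [Set.mem_setOf_eq] at hx
    by_contra hxM
    exact hx (hg'_eq x hxM)
  have hg'_int : IntervalIntegrable g' volume a b := by
    rw [intervalIntegrable_iff_integrableOn_Icc_of_le hab] at hf'_int ⊢
    exact hf'_int.congr (ae_restrict_of_ae hg'_ae)
  -- derivative of H
  have hderiv : ∀ x : ℝ, HasDerivWithinAt H (g' x) (Set.Ioi x) x := by
    intro x
    by_cases hxF : x ∈ F
    · -- derivative 0 at points of F
      have hg'x : g' x = 0 := by rw [hg'_def]; simp [hxF]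
      rw [hg'x]
      apply HasDerivAt.hasDerivWithinAt
      rw [hasDerivAt_iff_isLittleO, Asymptotics.isLittleO_iff]
      intro c hc
      have hHx : H x = 0 := by
        rw [hH_def]
        simp only [hd_def, Metric.infDist_zero_of_mem hxF, zero_pow (Nat.succ_ne_zero k),
          neg_zero, zero_div]
      filter_upwards [Metric.ball_mem_nhds x (by positivity : (0:ℝ) < min 1 c)] with y hy
      rw [Metric.mem_ball, Real.dist_eq] at hy
      have hyx1 : |y - x| ≤ 1 := le_trans hy.le (min_le_left _ _)
      have hyxc : |y - x| ≤ c := le_trans hy.le (min_le_right _ _)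
      have hdy : d y ≤ |y - x| := by
        have := Metric.infDist_le_dist_of_mem (x := y) hxF
        rwa [Real.dist_eq] at this
      have h1 : (d y) ^ (k + 1) ≤ |y - x| ^ (k + 1) :=
        pow_le_pow_left₀ (hd_nonneg y) hdy (k + 1)
      have h2 : |y - x| ^ (k + 1) ≤ c * |y - x| := by
        rw [pow_succ]
        have h3 : |y - x| ^ k ≤ c := by
          calc |y - x| ^ k ≤ |y - x| ^ 1 :=
                pow_le_pow_of_le_one (abs_nonneg _) hyx1 hk
            _ = |y - x| := pow_one _
            _ ≤ c := hyxc
        exact mul_le_mul_of_nonneg_right h3 (abs_nonneg _)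
      have hnorm : ‖H y - H x - (y - x) • (0:ℝ)‖ = (d y) ^ (k + 1) / K := by
        rw [hHx]
        simp only [smul_zero, sub_zero, hH_def, Real.norm_eq_abs, abs_div,
          abs_neg, abs_pow, abs_of_nonneg (hd_nonneg y), abs_of_pos hK]
      rw [hnorm, Real.norm_eq_abs]
      calc (d y) ^ (k + 1) / K ≤ (d y) ^ (k + 1) := by
            apply div_le_self (pow_nonneg (hd_nonneg y) _)
            rw [hK_def]; push_cast; linarith [Nat.cast_nonneg (α := ℝ) k]
        _ ≤ |y - x| ^ (k + 1) := h1
        _ ≤ c * |y - x| := h2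
    · -- in a gap
      obtain ⟨hzx, hxz'⟩ := hnotF_lt x hxF
      set z := flF F x with hz_def
      set z' := ceF F x with hz'_def
      have hzz' : z < z' := hzx.trans hxz'
      have hloc : ∀ y ∈ Set.Ioo z z', d y = min (y - z) (z' - y) := by
        intro y hy
        rw [hd_eq y, flF_gap hF_closed hF_below hy, ceF_gap hF_closed hF_above hy]
      rcases lt_trichotomy (x - z) (z' - x) with hlt | heq | hgt
      · -- left half
        have hg'x : g' x = (z - x) ^ k := by rw [hg'_def]; exact (if_neg hxF).trans (if_pos hlt)
        rw [hg'x]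
        apply HasDerivAt.hasDerivWithinAt
        have hD : HasDerivAt (fun y : ℝ => -(y - z) ^ (k + 1) / K) ((z - x) ^ k) x := by
          have h1 : HasDerivAt (fun y : ℝ => (y - z) ^ (k + 1))
              (((k : ℝ) + 1) * (x - z) ^ k * 1) x := by
            have := (((hasDerivAt_id x).sub_const z).fun_pow (k + 1))
            simpa using this
          have h2 := (h1.fun_neg.div_const K)
          refine h2.congr_deriv (Eq.symm ?_)
          have hzr : z - x = -(x - z) := by ring
          rw [hzr, hodd.neg_pow]
          field_simp
          ring
        apply hD.congr_of_eventuallyEq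
        have hmem : Set.Ioo z ((z + z') / 2) ∈ nhds x :=
          (isOpen_Ioo).mem_nhds ⟨hzx, by linarith⟩
        filter_upwards [hmem] with y hy
        have hy2 : y ∈ Set.Ioo z z' := ⟨hy.1, by linarith [hy.2]⟩
        rw [hH_def]
        simp only
        rw [hloc y hy2, min_eq_left (by linarith [hy.2] : y - z ≤ z' - y)]
      · -- midpoint: right derivative
        have hg'x : g' x = (z' - x) ^ k := by
          rw [hg'_def]; exact (if_neg hxF).trans (if_neg (not_lt.2 heq.ge))
        rw [hg'x]
        have hD : HasDerivAt (fun y : ℝ => -(z' - y) ^ (k + 1) / K) ((z' - x) ^ k) x := by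
          have h1 : HasDerivAt (fun y : ℝ => (z' - y) ^ (k + 1))
              (((k : ℝ) + 1) * (z' - x) ^ k * (-1)) x := by
            have := ((hasDerivAt_id x).const_sub z').fun_pow (k + 1)
            simpa using this
          have h2 := (h1.fun_neg.div_const K)
          refine h2.congr_deriv (Eq.symm ?_)
          field_simp
          rfl
        refine (hD.hasDerivWithinAt).congr_of_eventuallyEq ?_ ?_
        · have hmem : Set.Ioo x z' ∈ nhdsWithin x (Set.Ioi x) :=
            Ioo_mem_nhdsGT_of_mem ⟨le_refl x, hxz'⟩
          filter_upwards [hmem] with y hy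
          have hy2 : y ∈ Set.Ioo z z' := ⟨hzx.trans hy.1, hy.2⟩
          rw [hH_def]
          simp only
          rw [hloc y hy2, min_eq_right (by linarith [hy.1] : z' - y ≤ y - z)]
        · rw [hH_def]
          simp only
          rw [hd_eq x, ← hz_def, ← hz'_def, heq, min_self]
      · -- right half
        have hg'x : g' x = (z' - x) ^ k := by
          rw [hg'_def]; exact (if_neg hxF).trans (if_neg (not_lt.2 hgt.le))
        rw [hg'x]
        apply HasDerivAt.hasDerivWithinAt
        have hD : HasDerivAt (fun y : ℝ => -(z' - y) ^ (k + 1) / K) ((z' - x) ^ k) x := by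
          have h1 : HasDerivAt (fun y : ℝ => (z' - y) ^ (k + 1))
              (((k : ℝ) + 1) * (z' - x) ^ k * (-1)) x := by
            have := ((hasDerivAt_id x).const_sub z').fun_pow (k + 1)
            simpa using this
          have h2 := (h1.fun_neg.div_const K)
          refine h2.congr_deriv (Eq.symm ?_)
          field_simp
          rfl
        apply hD.congr_of_eventuallyEq
        have hmem : Set.Ioo ((z + z') / 2) z' ∈ nhds x :=
          (isOpen_Ioo).mem_nhds ⟨by linarith, hxz'⟩
        filter_upwards [hmem] with y hy
        have hy2 : y ∈ Set.Ioo z z' := ⟨by linarith [hy.1], hy.2⟩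
        rw [hH_def]
        simp only
        rw [hloc y hy2, min_eq_right (by linarith [hy.1] : z' - y ≤ y - z)]
  -- FTC
  have hFTC : ∫ y in a..b, g' y = H b - H a :=
    intervalIntegral.integral_eq_sub_of_hasDeriv_right_of_le hab hH_cont.continuousOn
      (fun x _ => hderiv x) hg'_int
  have hcongr : ∫ x in a..b, (rd x - x) ^ k = ∫ y in a..b, g' y := by
    apply intervalIntegral.integral_congr_ae
    filter_upwards [hg'_ae] with x hx _ using hx
  rw [hcongr, hFTC]
  -- final bound
  have hH_bounds : ∀ x, -(δ ^ (k + 1)) / K ≤ H x ∧ H x ≤ 0 := by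
    intro x
    have h1 : (d x) ^ (k + 1) ≤ δ ^ (k + 1) := pow_le_pow_left₀ (hd_nonneg x) (hd_le x) _
    have h2 : (0:ℝ) ≤ (d x) ^ (k + 1) := pow_nonneg (hd_nonneg x) _
    constructor
    · rw [hH_def]
      exact (div_le_div_iff_of_pos_right hK).2 (by linarith)
    · rw [hH_def]
      exact div_nonpos_of_nonpos_of_nonneg (by linarith) hK.le
  obtain ⟨ha1, ha2⟩ := hH_bounds a
  obtain ⟨hb1, hb2⟩ := hH_bounds b
  have hnd : -(δ ^ (k + 1)) / K = -(δ ^ (k + 1) / K) := neg_div K (δ ^ (k + 1))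
  have hgoal : (1 / ((k : ℝ) + 1)) * δ ^ (k + 1) = δ ^ (k + 1) / K := by
    rw [hK_def]; ring
  rw [hgoal, abs_le]
  constructor <;> linarith
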